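/- Let V = EuclideanSpace ℝ (Fin 2) (a 2-dimensional real topological vector space) and let B : V →ₗ[ℝ] V →ₗ[ℝ] ℝ be a symmetric bilinear form that is not identically zero. Suppose ρ : Circle →* (V ≃ₗ[ℝ] V) is a group homomorphism such that the map (z, v) ↦ ρ z v from Circle × V to V is continuous, each ρ z preserves B (i.e. B (ρ z v) (ρ z w) = B v w for all v, w ∈ V), and there exists z₀ ∈ Circle with ρ z₀ ≠ 1. Then B is definite: either B v v > 0 for every v ≠ 0, or B v v < 0 for every v ≠ 0. -/
import Mathlib

open Module

noncomputable section CircleRepHelpers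

instance : ConnectedSpace Circle :=
  Subtype.connectedSpace (isConnected_sphere (by simp [Complex.rank_real_complex]) 0 zero_le_one)

private lemma circle_avoid {f : Circle → ℝ} (hf : Continuous f) {c : ℝ} (hc : ∀ z, f z ≠ c)
    (h1 : c < f 1) : ∀ z, c < f z := by
  intro z
  by_contra h
  push_neg at h
  have hmem : c ∈ Set.Icc (f z) (f 1) := ⟨h, h1.le⟩
  obtain ⟨w, hw⟩ := intermediate_value_univ z 1 hf hmem
  exact hc w hw

private lemma circle_addhom_trivial {g : Circle → ℝ} (hg : Continuous g)
    (hadd : ∀ z w, g (z * w) = g z + g w) : ∀ z, g z = 0 := by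
  obtain ⟨zM, -, hM⟩ := isCompact_univ.exists_isMaxOn ⟨1, trivial⟩ hg.continuousOn
  obtain ⟨zm, -, hm⟩ := isCompact_univ.exists_isMinOn ⟨1, trivial⟩ hg.continuousOn
  have hM0 : g zM ≤ 0 := by
    have h : g (zM * zM) ≤ g zM := hM (Set.mem_univ (zM * zM))
    rw [hadd] at h; linarith
  have hm0 : 0 ≤ g zm := by
    have h : g zm ≤ g (zm * zm) := hm (Set.mem_univ (zm * zm))
    rw [hadd] at h; linarith
  intro z
  have h1 : g z ≤ g zM := hM (Set.mem_univ z)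
  have h2 : g zm ≤ g z := hm (Set.mem_univ z)
  linarith

private lemma circle_mulhom_one {g : Circle → ℝ} (hg : Continuous g)
    (hmul : ∀ z w, g (z * w) = g z * g w) (h0 : ∀ z, g z ≠ 0) (h1 : g 1 = 1) :
    ∀ z, g z = 1 := by
  have hpos : ∀ z, 0 < g z := circle_avoid hg h0 (by rw [h1]; norm_num)
  have hlog : ∀ z, Real.log (g z) = 0 :=
    circle_addhom_trivial (hg.log h0) (fun z w => by rw [hmul]; exact Real.log_mul (h0 z) (h0 w))
  intro z
  have h := Real.exp_log (hpos z)
  rw [hlog z, Real.exp_zero] at h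
  exact h.symm

end CircleRepHelpers

set_option maxHeartbeats 2000000

/-- **Lemma 2 of the paper.** A 2-dimensional real vector space with a nonzero
symmetric bilinear form admitting a continuous isometric circle representation
with a nontrivial element must have a definite form. -/
theorem circle_rep_isometric_nontrivial_implies_definite
    (B : EuclideanSpace ℝ (Fin 2) →ₗ[ℝ] EuclideanSpace ℝ (Fin 2) →ₗ[ℝ] ℝ)
    (hsymm : ∀ v w, B v w = B w v)
    (hB0 : B ≠ 0)
    (ρ : Circle →* (EuclideanSpace ℝ (Fin 2) ≃ₗ[ℝ] EuclideanSpace ℝ (Fin 2)))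
    (hcont : Continuous fun p : Circle × EuclideanSpace ℝ (Fin 2) => ρ p.1 p.2)
    (hiso : ∀ (z : Circle) (v w : EuclideanSpace ℝ (Fin 2)),
      B (ρ z v) (ρ z w) = B v w)
    (hnontriv : ∃ z₀ : Circle, ρ z₀ ≠ 1) :
    (∀ v : EuclideanSpace ℝ (Fin 2), v ≠ 0 → 0 < B v v) ∨
    (∀ v : EuclideanSpace ℝ (Fin 2), v ≠ 0 → B v v < 0) := by
  by_contra hcon
  push_neg at hcon
  obtain ⟨⟨v₁, hv₁, hq₁⟩, ⟨v₂, hv₂, hq₂⟩⟩ := hcon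
  -- Step 1: find a nonzero null vector u
  have hnull : ∃ u : EuclideanSpace ℝ (Fin 2), u ≠ 0 ∧ B u u = 0 := by
    rcases hq₁.lt_or_eq with h1 | h1
    · rcases hq₂.lt_or_eq with h2 | h2
      · set f : ℝ → ℝ := fun t => (1-t)^2 * B v₁ v₁ + 2*((1-t)*t) * B v₁ v₂ + t^2 * B v₂ v₂
          with hf
        have hfc : Continuous f := by fun_prop
        have key : ∀ t : ℝ, B ((1-t) • v₁ + t • v₂) ((1-t) • v₁ + t • v₂) = f t := by
          intro t
          have hs := hsymm v₂ v₁
          simp only [map_add, map_smul, LinearMap.add_apply, LinearMap.smul_apply,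
            smul_eq_mul, hf]
          rw [hs]; ring
        have hmem : (0:ℝ) ∈ Set.Icc (f 0) (f 1) := by
          constructor
          · simp only [hf]; norm_num; linarith
          · simp only [hf]; norm_num; linarith
        obtain ⟨t, ht⟩ := intermediate_value_univ 0 1 hfc hmem
        refine ⟨(1-t) • v₁ + t • v₂, ?_, by rw [key t, ht]⟩
        intro hzero
        by_cases h0t : t = 0
        · rw [h0t] at hzero; simp at hzero; exact hv₁ hzero
        · have ht2 : v₂ = (t⁻¹ * (t-1)) • v₁ := by
            have h3 : t • v₂ = (t - 1) • v₁ := by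
              have h4 : (1-t) • v₁ + t • v₂ - (1-t) • v₁ = -((1-t) • v₁) := by
                rw [hzero]; abel
              rw [← neg_smul] at h4
              rw [show t • v₂ = (1-t) • v₁ + t • v₂ - (1-t) • v₁ by abel, h4]
              congr 1; ring
            rw [mul_smul, ← h3, inv_smul_smul₀ h0t]
          have hcontra : B v₂ v₂ = (t⁻¹ * (t-1))^2 * B v₁ v₁ := by
            rw [ht2]
            simp only [map_smul, LinearMap.smul_apply, smul_eq_mul]
            ring
          nlinarith [sq_nonneg (t⁻¹ * (t-1))]
      · exact ⟨v₂, hv₂, h2.symm⟩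
    · exact ⟨v₁, hv₁, h1⟩
  obtain ⟨u, hu0, hqu⟩ := hnull
  obtain ⟨z₀, hz₀⟩ := hnontriv
  -- generic facts
  have hcont1 : ∀ v : EuclideanSpace ℝ (Fin 2), Continuous fun z : Circle => ρ z v := by
    intro v
    exact hcont.comp (continuous_id.prodMk continuous_const)
  have hρ1 : ∀ v : EuclideanSpace ℝ (Fin 2), ρ 1 v = v := by intro v; rw [map_one]; rfl
  have hρmul : ∀ (z w : Circle) (v : EuclideanSpace ℝ (Fin 2)),
      ρ (z * w) v = ρ z (ρ w v) := by
    intro z w v; rw [map_mul]; rfl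
  have hne : ∀ (z : Circle) (v : EuclideanSpace ℝ (Fin 2)), v ≠ 0 → ρ z v ≠ 0 := by
    intro z v hv; simp [hv]
  have hcard : Fintype.card (Fin 2) = finrank ℝ (EuclideanSpace ℝ (Fin 2)) := by simp
  -- We show ρ z₀ = 1 in both cases, contradiction.
  apply hz₀
  by_cases hrad : ∀ x : EuclideanSpace ℝ (Fin 2), B u x = 0
  case pos =>
    -- u is in the radical
    have hw : ∃ w : EuclideanSpace ℝ (Fin 2), B w w ≠ 0 := by
      by_contra hno
      push_neg at hno
      apply hB0
      apply LinearMap.ext; intro v; apply LinearMap.ext; intro x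
      have h := hno (v + x)
      simp only [map_add, LinearMap.add_apply] at h
      rw [hno v, hno x, hsymm x v] at h
      simp only [LinearMap.zero_apply]
      linarith
    obtain ⟨w, hqw⟩ := hw
    have huw : B u w = 0 := hrad w
    have hwu : B w u = 0 := by rw [hsymm w u]; exact hrad w
    have hli : LinearIndependent ℝ ![u, w] := by
      rw [LinearIndependent.pair_iff]
      intro s t hst
      have h1 : B w (s • u + t • w) = 0 := by rw [hst]; simp
      simp only [map_add, map_smul, smul_eq_mul, hwu] at h1
      have ht : t = 0 := by
        rcases mul_eq_zero.mp (by linarith : t * B w w = 0) with h | h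
        · exact h
        · exact absurd h hqw
      subst ht
      rw [zero_smul, add_zero] at hst
      rcases smul_eq_zero.mp hst with h | h
      · exact ⟨h, rfl⟩
      · exact absurd h hu0
    set b : Basis (Fin 2) ℝ (EuclideanSpace ℝ (Fin 2)) :=
      basisOfLinearIndependentOfCardEqFinrank hli hcard with hbdef
    have hb0 : b 0 = u := by
      rw [hbdef, coe_basisOfLinearIndependentOfCardEqFinrank]; rfl
    have hb1 : b 1 = w := by
      rw [hbdef, coe_basisOfLinearIndependentOfCardEqFinrank]; rfl
    have hrepr : ∀ v : EuclideanSpace ℝ (Fin 2), v = b.repr v 0 • u + b.repr v 1 • w := by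
      intro v
      have h := b.sum_repr v
      rw [Fin.sum_univ_two, hb0, hb1] at h
      exact h.symm
    have hcoordc : ∀ (i : Fin 2) (v : EuclideanSpace ℝ (Fin 2)),
        Continuous fun z : Circle => b.repr (ρ z v) i := by
      intro i v
      have heq : (fun z : Circle => b.repr (ρ z v) i) = fun z => (b.coord i) (ρ z v) := by
        funext z; simp [Basis.coord_apply]
      rw [heq]
      exact ((b.coord i).continuous_of_finiteDimensional).comp (hcont1 v)
    have huniq : ∀ x y x' y' : ℝ, x • u + y • w = x' • u + y' • w → x = x' ∧ y = y' := by
      intro x y x' y' h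
      have h3 : (x • u + y • w) - (x' • u + y' • w) = 0 := sub_eq_zero.mpr h
      have h2 : (x - x') • u + (y - y') • w = 0 := by
        rw [sub_smul, sub_smul, ← h3]; abel
      obtain ⟨e1, e2⟩ := LinearIndependent.pair_iff.mp hli _ _ h2
      exact ⟨sub_eq_zero.mp e1, sub_eq_zero.mp e2⟩
    have hucancel : ∀ c d : ℝ, c • u = d • u → c = d := by
      intro c d h
      have h2 : (c - d) • u = 0 := by rw [sub_smul, h, sub_self]
      rcases smul_eq_zero.mp h2 with h3 | h3
      · exact sub_eq_zero.mp h3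
      · exact absurd h3 hu0
    have hexp : ∀ x y : ℝ, B (x • u + y • w) (x • u + y • w) = y^2 * B w w := by
      intro x y
      simp only [map_add, map_smul, LinearMap.add_apply, LinearMap.smul_apply, smul_eq_mul,
        hqu, huw, hwu]
      ring
    have hβ : ∀ z : Circle, b.repr (ρ z u) 1 = 0 := by
      intro z
      have hinv : B (ρ z u) (ρ z u) = 0 := by rw [hiso]; exact hqu
      rw [hrepr (ρ z u), hexp] at hinv
      rcases mul_eq_zero.mp hinv with h | h
      · exact pow_eq_zero_iff two_ne_zero |>.mp h
      · exact absurd h hqw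
    have hρu : ∀ z : Circle, ρ z u = b.repr (ρ z u) 0 • u := by
      intro z
      have h := hrepr (ρ z u)
      rw [hβ z, zero_smul, add_zero] at h
      exact h
    have hexu : ∀ z : Circle, ∃ c : ℝ, ρ z u = c • u ∧ b.repr (ρ z u) 0 = c :=
      fun z => ⟨_, hρu z, rfl⟩
    have hα1 : b.repr (ρ 1 u) 0 = 1 := by
      rw [hρ1 u, ← hb0, b.repr_self]; simp
    have hαne : ∀ z, b.repr (ρ z u) 0 ≠ 0 := by
      intro z h
      apply hne z u hu0
      rw [hρu z, h, zero_smul]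
    have hαmul : ∀ z z', b.repr (ρ (z * z') u) 0 = b.repr (ρ z u) 0 * b.repr (ρ z' u) 0 := by
      intro z z'
      obtain ⟨a, ha, ha'⟩ := hexu z
      obtain ⟨c, hc, hc'⟩ := hexu z'
      obtain ⟨d, hd, hd'⟩ := hexu (z * z')
      rw [ha', hc', hd']
      apply hucancel
      rw [← hd, hρmul z z' u, hc, map_smul, ha, smul_smul, mul_comm]
    have hαone : ∀ z, b.repr (ρ z u) 0 = 1 :=
      circle_mulhom_one (hcoordc 0 u) hαmul hαne hα1
    have hfixu : ∀ z, ρ z u = u := by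
      intro z; rw [hρu z, hαone z, one_smul]
    -- w direction
    have hsq : ∀ z, (b.repr (ρ z w) 1)^2 = 1 := by
      intro z
      have hinv : B (ρ z w) (ρ z w) = B w w := hiso z w w
      rw [hrepr (ρ z w), hexp] at hinv
      exact mul_right_cancel₀ hqw (by rw [hinv, one_mul])
    have hbne : ∀ z, b.repr (ρ z w) 1 ≠ 0 := by
      intro z h
      have h2 := hsq z
      rw [h] at h2; norm_num at h2
    have hb1w : b.repr (ρ 1 w) 1 = 1 := by
      rw [hρ1 w, ← hb1, b.repr_self]; simp
    have hbpos := circle_avoid (hcoordc 1 w) hbne (by rw [hb1w]; norm_num)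
    have hbone : ∀ z, b.repr (ρ z w) 1 = 1 := by
      intro z; nlinarith [hsq z, hbpos z]
    have hρw : ∀ z, ρ z w = b.repr (ρ z w) 0 • u + w := by
      intro z
      have h := hrepr (ρ z w)
      rw [hbone z, one_smul] at h
      exact h
    have hexw : ∀ z : Circle, ∃ c : ℝ, ρ z w = c • u + w ∧ b.repr (ρ z w) 0 = c :=
      fun z => ⟨_, hρw z, rfl⟩
    have ha1 : b.repr (ρ 1 w) 0 = 0 := by
      rw [hρ1 w, ← hb1, b.repr_self]; simp [Finsupp.single_apply]
    have haadd : ∀ z z', b.repr (ρ (z * z') w) 0 = b.repr (ρ z w) 0 + b.repr (ρ z' w) 0 := by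
      intro z z'
      obtain ⟨a, ha, ha'⟩ := hexw z
      obtain ⟨c, hc, hc'⟩ := hexw z'
      obtain ⟨d, hd, hd'⟩ := hexw (z * z')
      rw [ha', hc', hd']
      have h1 : ρ (z * z') w = (a + c) • u + w := by
        rw [hρmul z z' w, hc, map_add, map_smul, hfixu z, ha, add_smul]
        abel
      rw [hd] at h1
      have h3 : d • u + (1:ℝ) • w = (a + c) • u + (1:ℝ) • w := by
        rw [one_smul]; exact h1
      exact (huniq _ _ _ _ h3).1
    have hazero := circle_addhom_trivial (hcoordc 0 w) haadd
    have hfixw : ∀ z, ρ z w = w := by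
      intro z; rw [hρw z, hazero z, zero_smul, zero_add]
    refine LinearEquiv.ext fun v => ?_
    have hv := hrepr v
    calc ρ z₀ v = ρ z₀ (b.repr v 0 • u + b.repr v 1 • w) := by rw [← hv]
      _ = b.repr v 0 • ρ z₀ u + b.repr v 1 • ρ z₀ w := by rw [map_add, map_smul, map_smul]
      _ = v := by rw [hfixu, hfixw, ← hv]
  case neg =>
    -- u is not in the radical: hyperbolic case
    push_neg at hrad
    obtain ⟨w₀, hw₀⟩ := hrad
    have hex1 : ∃ w₁ : EuclideanSpace ℝ (Fin 2), B u w₁ = 1 :=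
      ⟨(B u w₀)⁻¹ • w₀, by rw [map_smul, smul_eq_mul, inv_mul_cancel₀ hw₀]⟩
    obtain ⟨w₁, h1⟩ := hex1
    have hw1u : B w₁ u = 1 := by rw [hsymm]; exact h1
    have hex2 : ∃ w : EuclideanSpace ℝ (Fin 2), B u w = 1 ∧ B w w = 0 := by
      refine ⟨w₁ - (B w₁ w₁ / 2) • u, ?_, ?_⟩
      · rw [map_sub, map_smul, smul_eq_mul, h1, hqu]
        ring
      · simp only [map_sub, map_smul, LinearMap.sub_apply, LinearMap.smul_apply, smul_eq_mul,
          hqu, h1, hw1u]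
        ring
    obtain ⟨w, huw, hqw⟩ := hex2
    have hwu : B w u = 1 := by rw [hsymm]; exact huw
    have hli : LinearIndependent ℝ ![u, w] := by
      rw [LinearIndependent.pair_iff]
      intro s t hst
      have hB1 : B u (s • u + t • w) = 0 := by rw [hst]; simp
      have hB2 : B w (s • u + t • w) = 0 := by rw [hst]; simp
      simp only [map_add, map_smul, smul_eq_mul, hqu, huw, hwu, hqw] at hB1 hB2
      constructor <;> linarith
    set b : Basis (Fin 2) ℝ (EuclideanSpace ℝ (Fin 2)) :=
      basisOfLinearIndependentOfCardEqFinrank hli hcard with hbdef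
    have hb0 : b 0 = u := by
      rw [hbdef, coe_basisOfLinearIndependentOfCardEqFinrank]; rfl
    have hb1 : b 1 = w := by
      rw [hbdef, coe_basisOfLinearIndependentOfCardEqFinrank]; rfl
    have hrepr : ∀ v : EuclideanSpace ℝ (Fin 2), v = b.repr v 0 • u + b.repr v 1 • w := by
      intro v
      have h := b.sum_repr v
      rw [Fin.sum_univ_two, hb0, hb1] at h
      exact h.symm
    have hcoordc : ∀ (i : Fin 2) (v : EuclideanSpace ℝ (Fin 2)),
        Continuous fun z : Circle => b.repr (ρ z v) i := by
      intro i v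
      have heq : (fun z : Circle => b.repr (ρ z v) i) = fun z => (b.coord i) (ρ z v) := by
        funext z; simp [Basis.coord_apply]
      rw [heq]
      exact ((b.coord i).continuous_of_finiteDimensional).comp (hcont1 v)
    have hucancel : ∀ c d : ℝ, c • u = d • u → c = d := by
      intro c d h
      have h2 : (c - d) • u = 0 := by rw [sub_smul, h, sub_self]
      rcases smul_eq_zero.mp h2 with h3 | h3
      · exact sub_eq_zero.mp h3
      · exact absurd h3 hu0
    have hwcancel : ∀ c d : ℝ, c • w = d • w → c = d := by
      intro c d h
      have hw0 : w ≠ 0 := by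
        intro hw0
        rw [hw0] at huw; simp at huw
      have h2 : (c - d) • w = 0 := by rw [sub_smul, h, sub_self]
      rcases smul_eq_zero.mp h2 with h3 | h3
      · exact sub_eq_zero.mp h3
      · exact absurd h3 hw0
    have hexp : ∀ x y : ℝ, B (x • u + y • w) (x • u + y • w) = 2 * (x * y) := by
      intro x y
      simp only [map_add, map_smul, LinearMap.add_apply, LinearMap.smul_apply, smul_eq_mul,
        hqu, huw, hwu, hqw]
      ring
    have hexp2 : ∀ x y x' y' : ℝ, B (x • u + y • w) (x' • u + y' • w) = x * y' + y * x' := by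
      intro x y x' y'
      simp only [map_add, map_smul, LinearMap.add_apply, LinearMap.smul_apply, smul_eq_mul,
        hqu, huw, hwu, hqw]
      ring
    -- coordinate functions
    have hαβ : ∀ z, b.repr (ρ z u) 0 * b.repr (ρ z u) 1 = 0 := by
      intro z
      have hinv : B (ρ z u) (ρ z u) = 0 := by rw [hiso]; exact hqu
      rw [hrepr (ρ z u), hexp] at hinv
      linarith
    have hγδ : ∀ z, b.repr (ρ z w) 0 * b.repr (ρ z w) 1 = 0 := by
      intro z
      have hinv : B (ρ z w) (ρ z w) = 0 := by rw [hiso]; exact hqw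
      rw [hrepr (ρ z w), hexp] at hinv
      linarith
    have hcross : ∀ z, b.repr (ρ z u) 0 * b.repr (ρ z w) 1
        + b.repr (ρ z u) 1 * b.repr (ρ z w) 0 = 1 := by
      intro z
      have hinv : B (ρ z u) (ρ z w) = 1 := by rw [hiso]; exact huw
      rw [hrepr (ρ z u), hrepr (ρ z w), hexp2] at hinv
      linarith
    set F : Circle → ℝ := fun z => b.repr (ρ z u) 0 * b.repr (ρ z w) 1 with hFdef
    have hFc : Continuous F := (hcoordc 0 u).mul (hcoordc 1 w)
    have hF01 : ∀ z, F z = 0 ∨ F z = 1 := by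
      intro z
      rcases mul_eq_zero.mp (hαβ z) with h | h
      · left; rw [hFdef]; simp only; rw [h, zero_mul]
      · right
        have := hcross z
        rw [h, zero_mul, add_zero] at this
        rw [hFdef]; simpa using this
    have hFne : ∀ z, F z ≠ (1/2 : ℝ) := by
      intro z h
      rcases hF01 z with h2 | h2 <;> rw [h2] at h <;> norm_num at h
    have hα1 : b.repr (ρ 1 u) 0 = 1 := by
      rw [hρ1 u, ← hb0, b.repr_self]; simp
    have hδ1 : b.repr (ρ 1 w) 1 = 1 := by
      rw [hρ1 w, ← hb1, b.repr_self]; simp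
    have hF1 : F 1 = 1 := by rw [hFdef]; simp only; rw [hα1, hδ1, one_mul]
    have hFpos := circle_avoid hFc hFne (by rw [hF1]; norm_num)
    have hFone : ∀ z, F z = 1 := by
      intro z
      rcases hF01 z with h | h
      · exfalso; have := hFpos z; rw [h] at this; norm_num at this
      · exact h
    -- deduce β = γ = 0
    have hβ0 : ∀ z, b.repr (ρ z u) 1 = 0 := by
      intro z
      rcases mul_eq_zero.mp (hαβ z) with h | h
      · exfalso
        have := hFone z
        rw [hFdef] at this; simp only at this
        rw [h, zero_mul] at this; norm_num at this
      · exact h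
    have hγ0 : ∀ z, b.repr (ρ z w) 0 = 0 := by
      intro z
      rcases mul_eq_zero.mp (hγδ z) with h | h
      · exact h
      · exfalso
        have := hFone z
        rw [hFdef] at this; simp only at this
        rw [h, mul_zero] at this; norm_num at this
    have hρu : ∀ z : Circle, ρ z u = b.repr (ρ z u) 0 • u := by
      intro z
      have h := hrepr (ρ z u)
      rw [hβ0 z, zero_smul, add_zero] at h
      exact h
    have hρw : ∀ z : Circle, ρ z w = b.repr (ρ z w) 1 • w := by
      intro z
      have h := hrepr (ρ z w)
      rw [hγ0 z, zero_smul, zero_add] at h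
      exact h
    have hexu : ∀ z : Circle, ∃ c : ℝ, ρ z u = c • u ∧ b.repr (ρ z u) 0 = c :=
      fun z => ⟨_, hρu z, rfl⟩
    have hαne : ∀ z, b.repr (ρ z u) 0 ≠ 0 := by
      intro z h
      apply hne z u hu0
      rw [hρu z, h, zero_smul]
    have hαmul : ∀ z z', b.repr (ρ (z * z') u) 0 = b.repr (ρ z u) 0 * b.repr (ρ z' u) 0 := by
      intro z z'
      obtain ⟨a, ha, ha'⟩ := hexu z
      obtain ⟨c, hc, hc'⟩ := hexu z'
      obtain ⟨d, hd, hd'⟩ := hexu (z * z')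
      rw [ha', hc', hd']
      apply hucancel
      rw [← hd, hρmul z z' u, hc, map_smul, ha, smul_smul, mul_comm]
    have hαone : ∀ z, b.repr (ρ z u) 0 = 1 :=
      circle_mulhom_one (hcoordc 0 u) hαmul hαne hα1
    have hfixu : ∀ z, ρ z u = u := by
      intro z; rw [hρu z, hαone z, one_smul]
    have hδone : ∀ z, b.repr (ρ z w) 1 = 1 := by
      intro z
      have h := hFone z
      rw [hFdef] at h; simp only at h
      rw [hαone z, one_mul] at h
      exact h
    have hfixw : ∀ z, ρ z w = w := by
      intro z; rw [hρw z, hδone z, one_smul]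
    refine LinearEquiv.ext fun v => ?_
    have hv := hrepr v
    calc ρ z₀ v = ρ z₀ (b.repr v 0 • u + b.repr v 1 • w) := by rw [← hv]
      _ = b.repr v 0 • ρ z₀ u + b.repr v 1 • ρ z₀ w := by rw [map_add, map_smul, map_smul]
      _ = v := by rw [hfixu, hfixw, ← hv]
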